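/- If T is an invertible operator on a Hilbert space such that both T and T^{-1} are power bounded, then T is similar to a unitary operator; conversely, if T is similar to a unitary operator then T is invertible and both T and T^{-1} are power bounded. -/

import Mathlib

set_option maxHeartbeats 1000000
set_option synthInstance.maxHeartbeats 1000000

open ContinuousLinearMap Filter Topology

local notation "⟪" x ", " y "⟫" => @inner ℂ _ _ x y

namespace SzNagy

variable {H : Type*} [NormedAddCommGroup H] [InnerProductSpace ℂ H] [CompleteSpace H]

/-- Cesàro average of a sequence. -/
noncomputable def avg (a : ℕ → ℂ) (N : ℕ) : ℂ :=
    ((N : ℝ) + 1)⁻¹ • ∑ n ∈ Finset.range (N + 1), a n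

lemma norm_avg_le (a : ℕ → ℂ) (M : ℝ) (h : ∀ n, ‖a n‖ ≤ M) (N : ℕ) : ‖avg a N‖ ≤ M := by
  have hpos : (0:ℝ) < (N : ℝ) + 1 := by positivity
  have hsum : ‖∑ n ∈ Finset.range (N + 1), a n‖ ≤ ((N:ℝ) + 1) * M := by
    calc ‖∑ n ∈ Finset.range (N + 1), a n‖ ≤ ∑ n ∈ Finset.range (N + 1), ‖a n‖ :=
          norm_sum_le _ _
      _ ≤ ∑ _n ∈ Finset.range (N + 1), M := Finset.sum_le_sum fun n _ => h n
      _ = ((N:ℝ) + 1) * M := by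
          rw [Finset.sum_const, Finset.card_range]; push_cast; ring
  calc ‖avg a N‖ = ((N:ℝ) + 1)⁻¹ * ‖∑ n ∈ Finset.range (N + 1), a n‖ := by
        rw [avg, norm_smul, Real.norm_eq_abs, abs_of_pos (by positivity)]
    _ ≤ ((N:ℝ) + 1)⁻¹ * (((N:ℝ) + 1) * M) := by gcongr
    _ = M := by field_simp

lemma avg_add (a b : ℕ → ℂ) (N : ℕ) : avg (a + b) N = avg a N + avg b N := by
  simp only [avg, Pi.add_apply, Finset.sum_add_distrib, smul_add]

lemma avg_mul (c : ℂ) (a : ℕ → ℂ) (N : ℕ) : avg (fun n => c * a n) N = c * avg a N := by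
  simp only [avg, ← Finset.mul_sum, mul_smul_comm]

lemma avg_conj (a : ℕ → ℂ) (N : ℕ) :
    avg (fun n => (starRingEnd ℂ) (a n)) N = (starRingEnd ℂ) (avg a N) := by
  simp only [avg, Complex.real_smul, map_mul, map_sum, Complex.conj_ofReal]

lemma avg_shift (a : ℕ → ℂ) (N : ℕ) :
    avg (fun n => a (n + 1)) N = avg a N + ((N : ℝ) + 1)⁻¹ • (a (N + 1) - a 0) := by
  have h : ∑ n ∈ Finset.range (N + 1), a (n + 1)
      = ∑ n ∈ Finset.range (N + 1), a n + (a (N + 1) - a 0) := by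
    have h1 := Finset.sum_range_succ' a (N + 1)
    have h2 := Finset.sum_range_succ a (N + 1)
    rw [h2] at h1
    linear_combination -h1
  rw [avg, avg, h, smul_add]

lemma avg_re_im (a : ℕ → ℂ) (m : ℝ) (h : ∀ n, m ≤ (a n).re ∧ (a n).im = 0) (N : ℕ) :
    m ≤ (avg a N).re ∧ (avg a N).im = 0 := by
  have hpos : (0:ℝ) < (N : ℝ) + 1 := by positivity
  have hre : (avg a N).re = ((N:ℝ) + 1)⁻¹ * ∑ n ∈ Finset.range (N + 1), (a n).re := by
    rw [avg, Complex.smul_re, Complex.re_sum]; rfl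
  have him : (avg a N).im = ((N:ℝ) + 1)⁻¹ * ∑ n ∈ Finset.range (N + 1), (a n).im := by
    rw [avg, Complex.smul_im, Complex.im_sum]; rfl
  constructor
  · rw [hre]
    have : ((N:ℝ) + 1) * m ≤ ∑ n ∈ Finset.range (N + 1), (a n).re := by
      calc ((N:ℝ) + 1) * m = ∑ _n ∈ Finset.range (N + 1), m := by
            rw [Finset.sum_const, Finset.card_range]; push_cast; ring
        _ ≤ _ := Finset.sum_le_sum fun n _ => (h n).1
    calc m = ((N:ℝ) + 1)⁻¹ * (((N:ℝ) + 1) * m) := by field_simp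
      _ ≤ _ := by gcongr
  · rw [him]
    have : ∑ n ∈ Finset.range (N + 1), (a n).im = 0 :=
      Finset.sum_eq_zero fun n _ => (h n).2
    rw [this, mul_zero]

lemma exists_S (T T' : H →L[ℂ] H) (hTT' : T * T' = 1) (hT'T : T' * T = 1)
    (C : ℝ) (hC1 : 1 ≤ C) (hC : ∀ n : ℕ, ‖T ^ n‖ ≤ C)
    (C' : ℝ) (hC'1 : 1 ≤ C') (hC' : ∀ n : ℕ, ‖T' ^ n‖ ≤ C') :
    ∃ S : H →L[ℂ] H, 0 ≤ S ∧ IsUnit S ∧ star T * (S * T) = S := by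
  classical
  have hC0 : (0:ℝ) < C := lt_of_lt_of_le one_pos hC1
  have hC'0 : (0:ℝ) < C' := lt_of_lt_of_le one_pos hC'1
  -- the ultrafilter
  set 𝒰 : Ultrafilter ℕ := Ultrafilter.of atTop with h𝒰def
  have h𝒰 : (𝒰 : Filter ℕ) ≤ atTop := Ultrafilter.of_le _
  -- the sequences
  set seq : H → H → ℕ → ℂ := fun x y n => ⟪(T ^ n) x, (T ^ n) y⟫ with hseqdef
  have hbound : ∀ x y n, ‖seq x y n‖ ≤ C ^ 2 * ‖x‖ * ‖y‖ := by
    intro x y n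
    calc ‖seq x y n‖ ≤ ‖(T ^ n) x‖ * ‖(T ^ n) y‖ := norm_inner_le_norm _ _
      _ ≤ (‖T ^ n‖ * ‖x‖) * (‖T ^ n‖ * ‖y‖) := by
          gcongr <;> exact le_opNorm _ _
      _ ≤ (C * ‖x‖) * (C * ‖y‖) := by gcongr <;> [exact hC n; exact hC n]
      _ = C ^ 2 * ‖x‖ * ‖y‖ := by ring
  -- existence of ultrafilter limits of the Cesàro averages
  have hconv : ∀ x y : H, ∃ l : ℂ, Tendsto (avg (seq x y)) (𝒰 : Filter ℕ) (𝓝 l) := by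
    intro x y
    have hK : IsCompact (Metric.closedBall (0:ℂ) (C ^ 2 * ‖x‖ * ‖y‖)) :=
      isCompact_closedBall _ _
    have hmem : ∀ N, avg (seq x y) N ∈ Metric.closedBall (0:ℂ) (C ^ 2 * ‖x‖ * ‖y‖) := by
      intro N
      simpa [Metric.mem_closedBall, dist_zero_right] using
        norm_avg_le (seq x y) _ (hbound x y) N
    obtain ⟨l, -, hl⟩ := hK.ultrafilter_le_nhds (Ultrafilter.map (avg (seq x y)) 𝒰)
      (by
        rw [Ultrafilter.coe_map, le_principal_iff, mem_map]
        exact Filter.univ_mem' hmem)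
    exact ⟨l, by rwa [Ultrafilter.coe_map] at hl⟩
  choose B hB using hconv
  -- basic properties of B
  have hBadd : ∀ x y z : H, B x (y + z) = B x y + B x z := by
    intro x y z
    refine tendsto_nhds_unique (hB x (y + z)) ?_
    have he : avg (seq x (y + z)) = fun N => avg (seq x y) N + avg (seq x z) N := by
      funext N
      rw [show seq x (y + z) = seq x y + seq x z by
        funext n; simp [hseqdef, inner_add_right]]
      exact avg_add _ _ N
    rw [he]
    exact (hB x y).add (hB x z)
  have hBsmul : ∀ (c : ℂ) (x y : H), B x (c • y) = c * B x y := by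
    intro c x y
    refine tendsto_nhds_unique (hB x (c • y)) ?_
    have he : avg (seq x (c • y)) = fun N => c * avg (seq x y) N := by
      funext N
      rw [show seq x (c • y) = fun n => c * seq x y n by
        funext n; simp only [hseqdef, map_smul, inner_smul_right]]
      exact avg_mul _ _ N
    rw [he]
    exact (hB x y).const_mul c
  have hBconj : ∀ x y : H, B y x = (starRingEnd ℂ) (B x y) := by
    intro x y
    refine tendsto_nhds_unique (hB y x) ?_
    have he : avg (seq y x) = fun N => (starRingEnd ℂ) (avg (seq x y) N) := by
      funext N
      rw [show seq y x = fun n => (starRingEnd ℂ) (seq x y n) by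
        funext n; simp [hseqdef, inner_conj_symm]]
      exact avg_conj _ N
    rw [he]
    exact (Complex.continuous_conj.tendsto _).comp (hB x y)
  have hBnorm : ∀ x y : H, ‖B x y‖ ≤ C ^ 2 * ‖x‖ * ‖y‖ := by
    intro x y
    have hcl : IsClosed (Metric.closedBall (0:ℂ) (C ^ 2 * ‖x‖ * ‖y‖)) :=
      Metric.isClosed_closedBall
    have := hcl.mem_of_tendsto (hB x y) (Eventually.of_forall fun N => by
      simpa [Metric.mem_closedBall, dist_zero_right] using
        norm_avg_le (seq x y) _ (hbound x y) N)
    simpa [Metric.mem_closedBall, dist_zero_right] using this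
  -- shift invariance
  have hBshift : ∀ x y : H, B (T x) (T y) = B x y := by
    intro x y
    refine tendsto_nhds_unique (hB (T x) (T y)) ?_
    have hshift : seq (T x) (T y) = fun n => seq x y (n + 1) := by
      funext n
      simp only [hseqdef]
      rw [show (T ^ n) (T x) = (T ^ (n + 1)) x by
            rw [pow_succ, ContinuousLinearMap.mul_apply],
          show (T ^ n) (T y) = (T ^ (n + 1)) y by
            rw [pow_succ, ContinuousLinearMap.mul_apply]]
    have he : avg (seq (T x) (T y)) = fun N =>
        avg (seq x y) N + ((N : ℝ) + 1)⁻¹ • (seq x y (N + 1) - seq x y 0) := by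
      funext N
      rw [hshift]
      exact avg_shift _ N
    rw [he]
    have herr : Tendsto (fun N : ℕ => ((N : ℝ) + 1)⁻¹ • (seq x y (N + 1) - seq x y 0))
        atTop (𝓝 0) := by
      apply squeeze_zero_norm (a := fun N : ℕ => ((N : ℝ) + 1)⁻¹ * (2 * (C ^ 2 * ‖x‖ * ‖y‖)))
      · intro N
        rw [norm_smul, Real.norm_eq_abs, abs_of_pos (by positivity : (0:ℝ) < ((N:ℝ)+1)⁻¹)]
        gcongr
        calc ‖seq x y (N + 1) - seq x y 0‖ ≤ ‖seq x y (N + 1)‖ + ‖seq x y 0‖ :=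
              norm_sub_le _ _
          _ ≤ C ^ 2 * ‖x‖ * ‖y‖ + C ^ 2 * ‖x‖ * ‖y‖ := by
              gcongr <;> [exact hbound x y _; exact hbound x y _]
          _ = 2 * (C ^ 2 * ‖x‖ * ‖y‖) := by ring
      · have h0 : Tendsto (fun N : ℕ => ((N : ℝ) + 1)⁻¹) atTop (𝓝 0) := by
          simpa only [one_div] using (tendsto_one_div_add_atTop_nhds_zero_nat :
            Tendsto (fun n : ℕ => 1 / ((n : ℝ) + 1)) atTop (𝓝 0))
        simpa using h0.mul_const (2 * (C ^ 2 * ‖x‖ * ‖y‖))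
    have := (hB x y).add (herr.mono_left h𝒰)
    simpa using this
  -- lower bound
  have hinvpow : ∀ n : ℕ, (T' ^ n) * (T ^ n) = 1 := by
    intro n
    set u : (H →L[ℂ] H)ˣ := ⟨T, T', hTT', hT'T⟩ with hudef
    have h1 : T ^ n = ((u ^ n : (H →L[ℂ] H)ˣ) : H →L[ℂ] H) := by
      rw [Units.val_pow_eq_pow_val]
    have h2 : T' ^ n = (((u ^ n)⁻¹ : (H →L[ℂ] H)ˣ) : H →L[ℂ] H) := by
      rw [← inv_pow]; exact (Units.val_pow_eq_pow_val u⁻¹ n).symm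
    rw [h1, h2, ← Units.val_mul]
    simp
  have hlow_seq : ∀ (x : H) (n : ℕ),
      (C' ^ 2)⁻¹ * ‖x‖ ^ 2 ≤ (seq x x n).re ∧ (seq x x n).im = 0 := by
    intro x n
    have hxle : ‖x‖ ≤ C' * ‖(T ^ n) x‖ := by
      calc ‖x‖ = ‖(T' ^ n) ((T ^ n) x)‖ := by
            rw [← ContinuousLinearMap.mul_apply, hinvpow n, ContinuousLinearMap.one_apply]
        _ ≤ ‖T' ^ n‖ * ‖(T ^ n) x‖ := le_opNorm _ _
        _ ≤ C' * ‖(T ^ n) x‖ := by gcongr; exact hC' n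
    constructor
    · have hre : (seq x x n).re = ‖(T ^ n) x‖ ^ 2 := by
        simp only [hseqdef]
        rw [show ((⟪(T ^ n) x, (T ^ n) x⟫ : ℂ)).re = RCLike.re ⟪(T ^ n) x, (T ^ n) x⟫ from rfl]
        exact inner_self_eq_norm_sq _
      rw [hre]
      rw [inv_mul_le_iff₀ (by positivity)]
      calc ‖x‖ ^ 2 ≤ (C' * ‖(T ^ n) x‖) ^ 2 := by gcongr <;> positivity
        _ = C' ^ 2 * ‖(T ^ n) x‖ ^ 2 := by ring
    · simp only [hseqdef]
      rw [← RCLike.im_to_complex]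
      exact inner_self_im _
  have hBlow : ∀ x : H, (C' ^ 2)⁻¹ * ‖x‖ ^ 2 ≤ (B x x).re ∧ (B x x).im = 0 := by
    intro x
    have hcl : IsClosed {z : ℂ | (C' ^ 2)⁻¹ * ‖x‖ ^ 2 ≤ z.re ∧ z.im = 0} :=
      (isClosed_le continuous_const Complex.continuous_re).inter
        (isClosed_eq Complex.continuous_im continuous_const)
    exact hcl.mem_of_tendsto (hB x x) (Eventually.of_forall fun N =>
      avg_re_im (seq x x) _ (hlow_seq x) N)
  -- sesquilinearity in the first argument
  have hBaddl : ∀ x z y : H, B (x + z) y = B x y + B z y := by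
    intro x z y
    rw [hBconj y (x + z), hBadd y x z, map_add, ← hBconj y x, ← hBconj y z]
  have hBsmull : ∀ (c : ℂ) (x y : H), B (c • x) y = (starRingEnd ℂ) c * B x y := by
    intro c x y
    rw [hBconj y (c • x), hBsmul c y x, map_mul, ← hBconj y x]
  -- the operator S
  have hfc : ∀ x : H, ∃ f : H →L[ℂ] ℂ, (∀ y, f y = B x y) ∧ ‖f‖ ≤ C ^ 2 * ‖x‖ := by
    intro x
    refine ⟨LinearMap.mkContinuous
      { toFun := fun y => B x y
        map_add' := hBadd x
        map_smul' := fun c y => hBsmul c x y } (C ^ 2 * ‖x‖)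
      (fun y => by simpa [mul_assoc] using hBnorm x y), fun y => rfl, ?_⟩
    exact LinearMap.mkContinuous_norm_le _ (by positivity) _
  choose f hf hfnorm using hfc
  have hS0 : ∀ x : H, ∃ z : H, ∀ y, (⟪z, y⟫ : ℂ) = B x y := by
    intro x
    exact ⟨(InnerProductSpace.toDual ℂ H).symm (f x), fun y => by
      rw [InnerProductSpace.toDual_symm_apply, hf x y]⟩
  choose S0 hS0' using hS0
  have hS0add : ∀ x z : H, S0 (x + z) = S0 x + S0 z := by
    intro x z
    refine ext_inner_right ℂ fun v => ?_
    rw [hS0' (x + z) v, hBaddl, inner_add_left, hS0' x v, hS0' z v]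
  have hS0smul : ∀ (c : ℂ) (x : H), S0 (c • x) = c • S0 x := by
    intro c x
    refine ext_inner_right ℂ fun v => ?_
    rw [hS0' (c • x) v, hBsmull, inner_smul_left, hS0' x v]
  have hS0norm : ∀ x : H, ‖S0 x‖ ≤ C ^ 2 * ‖x‖ := by
    intro x
    have h1 : ‖S0 x‖ ^ 2 = (B x (S0 x)).re := by
      rw [← hS0' x (S0 x), ← RCLike.re_to_complex]
      exact (inner_self_eq_norm_sq (S0 x)).symm
    rcases eq_or_ne (S0 x) 0 with h | h
    · rw [h]; simp; positivity
    · have h2 : ‖S0 x‖ ^ 2 ≤ (C ^ 2 * ‖x‖) * ‖S0 x‖ := by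
        rw [h1]
        calc (B x (S0 x)).re ≤ ‖B x (S0 x)‖ := Complex.re_le_norm _
          _ ≤ C ^ 2 * ‖x‖ * ‖S0 x‖ := hBnorm x (S0 x)
      have h3 : (0:ℝ) < ‖S0 x‖ := norm_pos_iff.mpr h
      nlinarith
  set S : H →L[ℂ] H := LinearMap.mkContinuous
    { toFun := S0, map_add' := hS0add, map_smul' := hS0smul } (C ^ 2) hS0norm with hSdef
  have hS : ∀ x y : H, (⟪S x, y⟫ : ℂ) = B x y := fun x y => hS0' x y
  -- S is self-adjoint
  have hSsa : IsSelfAdjoint S := by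
    rw [ContinuousLinearMap.isSelfAdjoint_iff']
    refine ContinuousLinearMap.ext fun x => ext_inner_right ℂ fun y => ?_
    rw [ContinuousLinearMap.adjoint_inner_left, hS x y, ← inner_conj_symm, hS y x]
    exact (hBconj y x).symm
  -- S is positive
  have hSpos : 0 ≤ S := by
    rw [ContinuousLinearMap.nonneg_iff_isPositive]
    refine ⟨hSsa.isSymmetric, fun x => ?_⟩
    have : RCLike.re (⟪S x, x⟫ : ℂ) = (B x x).re := by rw [hS x x]; exact RCLike.re_to_complex
    show (0:ℝ) ≤ RCLike.re (⟪S x, x⟫ : ℂ)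
    rw [this]
    have := (hBlow x).1
    nlinarith [norm_nonneg x, sq_nonneg ‖x‖, inv_pos.mpr (pow_pos hC'0 2)]
  -- intertwining
  have hTST : star T * (S * T) = S := by
    rw [ContinuousLinearMap.star_eq_adjoint]
    refine ContinuousLinearMap.ext fun x => ext_inner_right ℂ fun y => ?_
    rw [ContinuousLinearMap.mul_apply, ContinuousLinearMap.mul_apply,
      ContinuousLinearMap.adjoint_inner_left, hS (T x) (T y), hBshift x y, hS x y]
  -- S is bounded below
  have hSlow : ∀ x : H, ‖x‖ ≤ C' ^ 2 * ‖S x‖ := by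
    intro x
    rcases eq_or_ne x 0 with h | h
    · simp [h]
    · have hx : (0:ℝ) < ‖x‖ := norm_pos_iff.mpr h
      have h1 : (C' ^ 2)⁻¹ * ‖x‖ ^ 2 ≤ ‖S x‖ * ‖x‖ := by
        calc (C' ^ 2)⁻¹ * ‖x‖ ^ 2 ≤ (B x x).re := (hBlow x).1
          _ ≤ ‖B x x‖ := Complex.re_le_norm _
          _ = ‖(⟪S x, x⟫ : ℂ)‖ := by rw [hS x x]
          _ ≤ ‖S x‖ * ‖x‖ := norm_inner_le_norm _ _
      have hC'2 : (0:ℝ) < C' ^ 2 := pow_pos hC'0 2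
      rw [← mul_le_mul_iff_of_pos_right hx]
      calc ‖x‖ * ‖x‖ = C' ^ 2 * ((C' ^ 2)⁻¹ * ‖x‖ ^ 2) := by field_simp
        _ ≤ C' ^ 2 * (‖S x‖ * ‖x‖) := by gcongr
        _ = C' ^ 2 * ‖S x‖ * ‖x‖ := by ring
  -- S is invertible
  have hanti : AntilipschitzWith (Real.toNNReal (C' ^ 2)) S := by
    refine ContinuousLinearMap.antilipschitz_of_bound S fun x => ?_
    rw [Real.coe_toNNReal _ (by positivity)]
    exact hSlow x
  have hinj : S.ker = ⊥ := LinearMap.ker_eq_bot.mpr hanti.injective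
  have hclosed : IsClosed (Set.range S) := hanti.isClosed_range S.uniformContinuous
  have hrange : S.range = ⊤ := by
    haveI : CompleteSpace (S.range) := by
      have hcl2 : IsClosed ((S.range : Submodule ℂ H) : Set H) := by
        rw [LinearMap.coe_range]
        exact hclosed
      exact hcl2.completeSpace_coe
    rw [← Submodule.orthogonal_eq_bot_iff]
    rw [Submodule.eq_bot_iff]
    intro y hy
    have hy' : ∀ x : H, (⟪S x, y⟫ : ℂ) = 0 := by
      intro x
      exact hy (S x) (LinearMap.mem_range_self _ x)
    have hSy : S y = 0 := by
      refine ext_inner_right ℂ fun v => ?_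
      have h1 : (⟪S y, v⟫ : ℂ) = (starRingEnd ℂ) (⟪S v, y⟫ : ℂ) := by
        rw [hS y v, hS v y, hBconj v y]
      rw [h1, hy' v, map_zero, inner_zero_left]
    refine hanti.injective (?_ : S y = S 0)
    simp [hSy]
  have hSu : IsUnit S := by
    set e := ContinuousLinearEquiv.ofBijective S hinj hrange with hedef
    have hcoe : ∀ x, e x = S x := fun x => rfl
    refine ⟨⟨S, (e.symm : H →L[ℂ] H), ?_, ?_⟩, rfl⟩
    · refine ContinuousLinearMap.ext fun x => ?_
      have : S ((e.symm : H →L[ℂ] H) x) = e (e.symm x) := (hcoe _).symm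
      rw [ContinuousLinearMap.mul_apply, ContinuousLinearMap.one_apply, this,
        e.apply_symm_apply]
    · refine ContinuousLinearMap.ext fun x => ?_
      have : (e.symm : H →L[ℂ] H) (S x) = e.symm (e x) := by rw [hcoe]; rfl
      rw [ContinuousLinearMap.mul_apply, ContinuousLinearMap.one_apply, this,
        e.symm_apply_apply]
  exact ⟨S, hSpos, hSu, hTST⟩

lemma norm_le_one_of_mem_unitary (U : H →L[ℂ] H) (hU : U ∈ unitary (H →L[ℂ] H)) : ‖U‖ ≤ 1 := by
  have h1 : ‖star U * U‖ = ‖U‖ * ‖U‖ := CStarRing.norm_star_mul_self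
  rw [Unitary.star_mul_self_of_mem hU] at h1
  have h2 : ‖(1 : H →L[ℂ] H)‖ ≤ 1 := ContinuousLinearMap.norm_id_le
  nlinarith [norm_nonneg U]

lemma easy_dir (X X' U T : H →L[ℂ] H) (h1 : X ∘L X' = 1) (h2 : X' ∘L X = 1)
    (hU : U ∈ unitary (H →L[ℂ] H)) (hT : T = X ∘L U ∘L X') :
    ∃ C : ℝ, ∀ n : ℕ, ‖T ^ n‖ ≤ C := by
  refine ⟨‖X‖ * ‖X'‖, fun n => ?_⟩
  set u : (H →L[ℂ] H)ˣ := ⟨X, X', h1, h2⟩ with hu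
  have hT' : T = ↑u * U * ↑u⁻¹ := by rw [hT]; exact (mul_assoc _ _ _).symm
  have hpow : T ^ n = X * U ^ n * X' := by rw [hT', Units.conj_pow]; rfl
  have hUn : ‖U ^ n‖ ≤ 1 := norm_le_one_of_mem_unitary _ (pow_mem hU n)
  calc ‖T ^ n‖ = ‖X * U ^ n * X'‖ := by rw [hpow]
    _ ≤ ‖X * U ^ n‖ * ‖X'‖ := norm_mul_le _ _
    _ ≤ (‖X‖ * ‖U ^ n‖) * ‖X'‖ := by gcongr; exact norm_mul_le _ _
    _ ≤ (‖X‖ * 1) * ‖X'‖ := by gcongr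
    _ = ‖X‖ * ‖X'‖ := by ring
lemma similar_of_exists_S (T T' S : H →L[ℂ] H) (hTT' : T * T' = 1) (hT'T : T' * T = 1)
    (hS : 0 ≤ S) (hSu : IsUnit S) (hTST : star T * (S * T) = S) :
    ∃ X X' U : H →L[ℂ] H, X ∘L X' = 1 ∧ X' ∘L X = 1 ∧
      U ∈ unitary (H →L[ℂ] H) ∧ T = X ∘L U ∘L X' := by
  obtain ⟨X, hXdef⟩ : ∃ X : H →L[ℂ] H, X = CFC.sqrt S := ⟨_, rfl⟩
  have hXX : X * X = S := by rw [hXdef]; exact CFC.sqrt_mul_sqrt_self S hS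
  have hXsa : IsSelfAdjoint X := by rw [hXdef]; exact IsSelfAdjoint.of_nonneg (CFC.sqrt_nonneg S)
  obtain ⟨u, hu⟩ : ∃ u : (H →L[ℂ] H)ˣ, (u : H →L[ℂ] H) = S := ⟨hSu.unit, hSu.unit_spec⟩
  have hcommS : Commute X (u : H →L[ℂ] H) := by
    rw [hu, ← hXX]; exact (Commute.refl X).mul_right (Commute.refl X)
  have hcomm_inv : Commute X ((u⁻¹ : (H →L[ℂ] H)ˣ) : H →L[ℂ] H) := hcommS.units_inv_right
  obtain ⟨X', hX'def⟩ : ∃ X' : H →L[ℂ] H, X' = X * ↑u⁻¹ := ⟨_, rfl⟩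
  have hX_X' : X * X' = 1 := by
    rw [hX'def, ← mul_assoc, hXX, ← hu, u.mul_inv]
  have hX'_X : X' * X = 1 := by
    rw [hX'def, hcomm_inv.eq, mul_assoc, hXX, ← hu, u.inv_mul]
  obtain ⟨U, hUdef⟩ : ∃ U : H →L[ℂ] H, U = X * T * X' := ⟨_, rfl⟩
  have hX'sa : IsSelfAdjoint X' := by
    have h1 : star X' * X = 1 := by
      rw [← hXsa.star_eq, ← star_mul, hX_X', star_one]
    calc star X' = star X' * (X * X') := by rw [hX_X', mul_one]
      _ = (star X' * X) * X' := by rw [mul_assoc]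
      _ = X' := by rw [h1, one_mul]
  have hstarU : star U = X' * star T * X := by
    rw [hUdef]
    calc star (X * T * X') = star X' * (star T * star X) := by rw [star_mul, star_mul]
      _ = X' * star T * X := by rw [hXsa.star_eq, hX'sa.star_eq, mul_assoc]
  have hUU : star U * U = 1 := by
    have e1 : star U * U = X' * (star T * (S * T)) * X' := by
      rw [hstarU, hUdef, ← hXX]; simp only [mul_assoc]
    rw [e1, hTST, ← hXX]
    calc X' * (X * X) * X' = (X' * X) * (X * X') := by simp only [mul_assoc]
      _ = 1 := by rw [hX'_X, hX_X', one_mul]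
  have hUV : U * (X * T' * X') = 1 := by
    calc U * (X * T' * X') = X * (T * ((X' * X) * (T' * X'))) := by
          rw [hUdef]; simp only [mul_assoc]
      _ = X * ((T * T') * X') := by rw [hX'_X, one_mul, ← mul_assoc T T' X']
      _ = 1 := by rw [hTT', one_mul, hX_X']
  have hUstar : U * star U = 1 := by
    have h2 : star U = X * T' * X' := by
      calc star U = star U * (U * (X * T' * X')) := by rw [hUV, mul_one]
        _ = (star U * U) * (X * T' * X') := (mul_assoc _ _ _).symm
        _ = X * T' * X' := by rw [hUU, one_mul]
    rw [h2, hUV]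
  have hT_eq : T = X' * U * X := by
    calc T = (X' * X) * T * (X' * X) := by rw [hX'_X, one_mul, mul_one]
      _ = X' * (X * T * X') * X := by simp only [mul_assoc]
      _ = X' * U * X := by rw [← hUdef]
  exact ⟨X', X, U, hX'_X, hX_X', Unitary.mem_iff.mpr ⟨hUU, hUstar⟩, by rw [hT_eq]; rfl⟩
end SzNagy

/-- Sz.-Nagy's theorem: `T` is similar to a unitary operator if and only if `T` is
invertible and both `T` and `T⁻¹` are power bounded. -/
theorem stmt7 {H : Type*} [NormedAddCommGroup H] [InnerProductSpace ℂ H] [CompleteSpace H]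
    (T : H →L[ℂ] H) :
    (∃ X X' U : H →L[ℂ] H, X ∘L X' = 1 ∧ X' ∘L X = 1 ∧
        U ∈ unitary (H →L[ℂ] H) ∧ T = X ∘L U ∘L X') ↔
    (∃ T' : H →L[ℂ] H, T ∘L T' = 1 ∧ T' ∘L T = 1 ∧
        (∃ C : ℝ, ∀ n : ℕ, ‖T ^ n‖ ≤ C) ∧ (∃ C : ℝ, ∀ n : ℕ, ‖T' ^ n‖ ≤ C)) := by
  constructor
  · rintro ⟨X, X', U, h1, h2, hU, hT⟩
    have h1p : ∀ w, X (X' w) = w := fun w => by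
      have := congrArg (fun (g : H →L[ℂ] H) => g w) h1; simpa using this
    have h2p : ∀ w, X' (X w) = w := fun w => by
      have := congrArg (fun (g : H →L[ℂ] H) => g w) h2; simpa using this
    have hUsp : ∀ w, U ((star U) w) = w := fun w => by
      have := congrArg (fun (g : H →L[ℂ] H) => g w) (Unitary.mul_star_self_of_mem hU)
      simpa [ContinuousLinearMap.mul_apply] using this
    have hsUp : ∀ w, (star U) (U w) = w := fun w => by
      have := congrArg (fun (g : H →L[ℂ] H) => g w) (Unitary.star_mul_self_of_mem hU)
      simpa [ContinuousLinearMap.mul_apply] using this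
    refine ⟨X ∘L star U ∘L X', ?_, ?_, SzNagy.easy_dir X X' U T h1 h2 hU hT,
      SzNagy.easy_dir X X' (star U) _ h1 h2 (Unitary.star_mem hU) rfl⟩
    · refine ContinuousLinearMap.ext fun v => ?_
      simp [hT, h1p, h2p, hUsp, hsUp]
    · refine ContinuousLinearMap.ext fun v => ?_
      simp [hT, h1p, h2p, hUsp, hsUp]
  · rintro ⟨T', hTT', hT'T, ⟨C, hC⟩, ⟨C', hC'⟩⟩
    obtain ⟨S, hSpos, hSu, hTST⟩ := SzNagy.exists_S T T' hTT' hT'T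
      (max C 1) (le_max_right _ _) (fun n => le_trans (hC n) (le_max_left _ _))
      (max C' 1) (le_max_right _ _) (fun n => le_trans (hC' n) (le_max_left _ _))
    exact SzNagy.similar_of_exists_S T T' S hTT' hT'T hSpos hSu hTST
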